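/- Let s, t : Fin M → ℝ be tuples of points in [0, 2π), and let d(x₁, x₂) = min(|x₁ − x₂|, 2π − |x₁ − x₂|) be the circle distance. For every permutation σ of Fin M, the circle matching cost satisfies ∑_{i} d(s(i), t(σ(i))) ≥ min_{z ∈ ℤ} ∫_{0}^{2π} |F(y) + z| dy (the minimum over integers z exists since the integral tends to ∞ as |z| → ∞). -/

import Mathlib

open Finset Real MeasureTheory

private lemma ind_mono (a : ℝ) : Monotone (fun y => if a < y then (1:ℝ) else 0) := by
  intro x y hxy
  by_cases h : a < x
  · simp [h, lt_of_lt_of_le h hxy]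
  · by_cases h' : a < y <;> simp [h, h']

private lemma step_intable (a b c x y : ℝ) :
    IntervalIntegrable
      (fun u => |(if a < u then (1:ℝ) else 0) - (if b < u then 1 else 0) + c|) volume x y := by
  apply IntervalIntegrable.abs
  exact (((ind_mono a).intervalIntegrable).sub ((ind_mono b).intervalIntegrable)).add
    intervalIntegrable_const

private lemma piece_integral (a b c : ℝ) (ha : 0 ≤ a) (hab : a ≤ b) (hbT : b ≤ 2*π) :
    (∫ y in (0:ℝ)..(2*π), |(if a < y then (1:ℝ) else 0) - (if b < y then 1 else 0) + c|)
      = |c| * a + |1 + c| * (b - a) + |c| * (2*π - b) := by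
  rw [← intervalIntegral.integral_add_adjacent_intervals (step_intable a b c 0 a)
        (step_intable a b c a (2*π)),
      ← intervalIntegral.integral_add_adjacent_intervals (step_intable a b c a b)
        (step_intable a b c b (2*π))]
  have h1 : (∫ y in (0:ℝ)..a, |(if a < y then (1:ℝ) else 0) - (if b < y then 1 else 0) + c|)
      = |c| * a := by
    rw [intervalIntegral.integral_of_le ha,
        setIntegral_congr_fun measurableSet_Ioc (g := fun _ => |c|) ?_, setIntegral_const]
    · rw [Real.volume_real_Ioc_of_le ha, smul_eq_mul]
      ring
    · intro y hy
      have h1 : ¬ a < y := not_lt.2 hy.2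
      have h2 : ¬ b < y := not_lt.2 (hy.2.trans hab)
      simp [h1, h2]
  have h2 : (∫ y in a..b, |(if a < y then (1:ℝ) else 0) - (if b < y then 1 else 0) + c|)
      = |1 + c| * (b - a) := by
    rw [intervalIntegral.integral_of_le hab,
        setIntegral_congr_fun measurableSet_Ioc (g := fun _ => |1 + c|) ?_, setIntegral_const]
    · rw [Real.volume_real_Ioc_of_le hab, smul_eq_mul]
      ring
    · intro y hy
      have h1 : a < y := hy.1
      have h2 : ¬ b < y := not_lt.2 hy.2
      simp [h1, h2]
  have h3 : (∫ y in b..(2*π), |(if a < y then (1:ℝ) else 0) - (if b < y then 1 else 0) + c|)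
      = |c| * (2*π - b) := by
    rw [intervalIntegral.integral_of_le hbT,
        setIntegral_congr_fun measurableSet_Ioc (g := fun _ => |c|) ?_, setIntegral_const]
    · rw [Real.volume_real_Ioc_of_le hbT, smul_eq_mul]
      ring
    · intro y hy
      have h1 : a < y := lt_of_le_of_lt hab hy.1
      have h2 : b < y := hy.1
      simp [h1, h2]
  rw [h1, h2, h3]; ring

private lemma exists_c (a b : ℝ) (ha : a ∈ Set.Ico 0 (2*π)) (hb : b ∈ Set.Ico 0 (2*π)) :
    ∃ c : ℤ, (∫ y in (0:ℝ)..(2*π),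
        |(if a < y then (1:ℝ) else 0) - (if b < y then 1 else 0) + (c:ℝ)|)
      = min |a - b| (2*π - |a - b|) := by
  rcases le_total a b with hab | hab
  · have habs : |a - b| = b - a := by rw [abs_sub_comm]; exact abs_of_nonneg (sub_nonneg.2 hab)
    rcases le_total (b - a) (2*π - (b - a)) with hmin | hmin
    · refine ⟨0, ?_⟩
      push_cast
      rw [piece_integral a b 0 ha.1 hab hb.2.le, habs, min_eq_left (habs ▸ hmin)]
      simp
    · refine ⟨-1, ?_⟩
      push_cast
      rw [piece_integral a b (-1) ha.1 hab hb.2.le, habs, min_eq_right (habs ▸ hmin)]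
      simp; ring
  · -- a ≥ b : swap roles, use  |f - g + c| = |g - f + (-c)|
    have habs : |a - b| = a - b := abs_of_nonneg (sub_nonneg.2 hab)
    have key : ∀ c : ℝ, (fun y => |(if a < y then (1:ℝ) else 0) - (if b < y then 1 else 0) + c|)
        = fun y => |(if b < y then (1:ℝ) else 0) - (if a < y then 1 else 0) + (-c)| := by
      intro c; funext y
      rw [← abs_neg]; ring_nf
    rcases le_total (a - b) (2*π - (a - b)) with hmin | hmin
    · refine ⟨0, ?_⟩
      push_cast
      rw [key 0, show (-(0:ℝ)) = 0 by ring,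
          piece_integral b a 0 hb.1 hab ha.2.le, habs, min_eq_left (habs ▸ hmin)]
      simp
    · refine ⟨1, ?_⟩
      push_cast
      rw [key 1,
          piece_integral b a (-1) hb.1 hab ha.2.le, habs, min_eq_right (habs ▸ hmin)]
      simp; ring


private lemma sum_intable {M : ℕ} (f : Fin M → ℝ → ℝ) (x y : ℝ)
    (h : ∀ i, IntervalIntegrable (f i) volume x y) :
    IntervalIntegrable (fun u => ∑ i, f i u) volume x y := by
  have h' := IntervalIntegrable.sum (μ := volume) (a := x) (b := y) univ (fun i _ => h i)
  have : (∑ i, f i) = fun u => ∑ i, f i u := funext fun u => by simp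
  rwa [this] at h'

private lemma integral_abs_sum_le {M : ℕ} (f : Fin M → ℝ → ℝ) (T : ℝ) (hT : 0 ≤ T)
    (hint : ∀ i, IntervalIntegrable (f i) volume 0 T)
    (habs : ∀ i, IntervalIntegrable (fun y => |f i y|) volume 0 T) :
    (∫ y in (0:ℝ)..T, |∑ i, f i y|) ≤ ∑ i, ∫ y in (0:ℝ)..T, |f i y| := by
  rw [← intervalIntegral.integral_finset_sum (fun i (_ : i ∈ univ) => habs i)]
  apply intervalIntegral.integral_mono_on hT
  · exact (sum_intable f 0 T hint).abs
  · exact sum_intable _ 0 T habs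
  · intro y _
    exact Finset.abs_sum_le_sum_abs _ _

/-- On the circle of unit radius, the cost of any matching is bounded below by the
minimum over integers `z` of `∫_0^{2π} |F(y) + z| dy`. -/
theorem circle_matching_cost_ge (M : ℕ) (s t : Fin M → ℝ)
    (hs : ∀ i, s i ∈ Set.Ico 0 (2 * π)) (ht : ∀ i, t i ∈ Set.Ico 0 (2 * π))
    (σ : Equiv.Perm (Fin M)) :
    ∑ i, min |s i - t (σ i)| (2 * π - |s i - t (σ i)|) ≥
      ⨅ z : ℤ, ∫ y in (0:ℝ)..(2 * π),
        |((((univ.filter fun i => s i < y).card : ℤ)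
          - ((univ.filter fun i => t i < y).card : ℤ) : ℤ) : ℝ) + (z : ℝ)| := by
  have hc : ∀ i : Fin M, ∃ c : ℤ, (∫ y in (0:ℝ)..(2*π),
      |(if s i < y then (1:ℝ) else 0) - (if t (σ i) < y then 1 else 0) + (c:ℝ)|)
      = min |s i - t (σ i)| (2*π - |s i - t (σ i)|) :=
    fun i => exists_c _ _ (hs i) (ht (σ i))
  choose c hcint using hc
  set g : Fin M → ℝ → ℝ :=
    fun i y => (if s i < y then (1:ℝ) else 0) - (if t (σ i) < y then 1 else 0) + (c i : ℝ)
    with hg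
  have hπ : (0:ℝ) ≤ 2 * π := by positivity
  have hpt : ∀ y : ℝ, ((((univ.filter fun i => s i < y).card : ℤ)
          - ((univ.filter fun i => t i < y).card : ℤ) : ℤ) : ℝ) + ((∑ i, c i : ℤ) : ℝ)
      = ∑ i, g i y := by
    intro y
    have h1 : ∑ i, (if s i < y then (1:ℝ) else 0)
        = ((univ.filter fun i => s i < y).card : ℝ) := by
      simp [Finset.sum_boole]
    have h2 : ∑ i, (if t (σ i) < y then (1:ℝ) else 0)
        = ((univ.filter fun i => t i < y).card : ℝ) := by
      rw [Equiv.sum_comp σ (fun i => if t i < y then (1:ℝ) else 0)]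
      simp [Finset.sum_boole]
    rw [hg]
    rw [Finset.sum_add_distrib, Finset.sum_sub_distrib, h1, h2]
    push_cast
    ring
  have hbdd : BddBelow (Set.range fun z : ℤ => ∫ y in (0:ℝ)..(2 * π),
        |((((univ.filter fun i => s i < y).card : ℤ)
          - ((univ.filter fun i => t i < y).card : ℤ) : ℤ) : ℝ) + (z : ℝ)|) := by
    refine ⟨0, ?_⟩
    rintro x ⟨z, rfl⟩
    exact intervalIntegral.integral_nonneg hπ (fun y _ => abs_nonneg _)
  refine le_trans (ciInf_le hbdd (∑ i, c i)) ?_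
  have step1 : (∫ y in (0:ℝ)..(2 * π),
        |((((univ.filter fun i => s i < y).card : ℤ)
          - ((univ.filter fun i => t i < y).card : ℤ) : ℤ) : ℝ) + ((∑ i, c i : ℤ) : ℝ)|)
      = ∫ y in (0:ℝ)..(2 * π), |∑ i, g i y| :=
    intervalIntegral.integral_congr (fun y _ => by rw [hpt y])
  have hint : ∀ i, IntervalIntegrable (g i) volume 0 (2*π) := fun i =>
    (((ind_mono (s i)).intervalIntegrable).sub
      ((ind_mono (t (σ i))).intervalIntegrable)).add intervalIntegrable_const
  have habs : ∀ i, IntervalIntegrable (fun y => |g i y|) volume 0 (2*π) := fun i =>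
    (hint i).abs
  calc (∫ y in (0:ℝ)..(2 * π),
        |((((univ.filter fun i => s i < y).card : ℤ)
          - ((univ.filter fun i => t i < y).card : ℤ) : ℤ) : ℝ) + ((∑ i, c i : ℤ) : ℝ)|)
      = ∫ y in (0:ℝ)..(2 * π), |∑ i, g i y| := step1
    _ ≤ ∑ i, ∫ y in (0:ℝ)..(2*π), |g i y| := integral_abs_sum_le g (2*π) hπ hint habs
    _ = ∑ i, min |s i - t (σ i)| (2 * π - |s i - t (σ i)|) :=
        Finset.sum_congr rfl (fun i _ => hcint i)
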